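/- If Λ is an ε-non-entangling map and Ω is a δ-non-entangling map (i.e. they map every separable state to a state of global robustness at most ε, respectively δ), then the composition Λ ∘ Ω is an (ε + δ + εδ)-non-entangling map. -/

import Mathlib

open Matrix ComplexOrder

/-- A quantum state: a positive semidefinite operator of unit trace. -/
def IsState {n : Type*} [Fintype n] [DecidableEq n] (ρ : Matrix n n ℂ) : Prop :=
  ρ.PosSemidef ∧ ρ.trace = 1

/-- The tensor product of m single-party operators. -/
def prodMat {m : ℕ} {d : Fin m → ℕ} (σ : ∀ i, Matrix (Fin (d i)) (Fin (d i)) ℂ) :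
    Matrix (∀ i, Fin (d i)) (∀ i, Fin (d i)) ℂ :=
  Matrix.of fun x y => ∏ i, σ i (x i) (y i)

/-- Fully separable states: convex combinations of product states. -/
def IsSepState {m : ℕ} {d : Fin m → ℕ}
    (ρ : Matrix (∀ i, Fin (d i)) (∀ i, Fin (d i)) ℂ) : Prop :=
  ∃ (N : ℕ) (p : Fin N → ℝ) (σ : Fin N → ∀ i, Matrix (Fin (d i)) (Fin (d i)) ℂ),
    (∀ j, 0 ≤ p j) ∧ (∑ j, p j = 1) ∧
    (∀ j i, (σ j i).PosSemidef ∧ (σ j i).trace = 1) ∧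
    ρ = ∑ j, (p j : ℂ) • prodMat (σ j)

/-- The global robustness of entanglement. -/
noncomputable def RG {m : ℕ} {d : Fin m → ℕ}
    (ρ : Matrix (∀ i, Fin (d i)) (∀ i, Fin (d i)) ℂ) : ℝ :=
  sInf { s : ℝ | 0 ≤ s ∧ ∃ π, IsState π ∧ IsSepState ((1 + s)⁻¹ • (ρ + s • π)) }

/-- A completely positive (Kraus form) trace-preserving map. -/
def IsCPTP {n : Type*} [Fintype n] [DecidableEq n]
    (Λ : Matrix n n ℂ →ₗ[ℂ] Matrix n n ℂ) : Prop :=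
  (∃ (N : ℕ) (K : Fin N → Matrix n n ℂ), ∀ X, Λ X = ∑ i, K i * X * (K i)ᴴ) ∧
    (∀ X, (Λ X).trace = X.trace)

/-- An η-non-entangling CPTP map: every separable state is mapped to a state of global
robustness at most η. -/
def IsNonEntangling {m : ℕ} {d : Fin m → ℕ}
    (Λ : Matrix (∀ i, Fin (d i)) (∀ i, Fin (d i)) ℂ →ₗ[ℂ]
         Matrix (∀ i, Fin (d i)) (∀ i, Fin (d i)) ℂ) (η : ℝ) : Prop :=
  IsCPTP Λ ∧ ∀ σ, IsState σ → IsSepState σ → RG (Λ σ) ≤ η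


section Helpers
variable {n : Type*} [Fintype n] [DecidableEq n]

lemma real_smul_cmatrix (r : ℝ) (M : Matrix n n ℂ) : r • M = (r : ℂ) • M := by
  ext i j
  simp [Complex.real_smul]

lemma smul_psd {c : ℝ} (hc : 0 ≤ c) {M : Matrix n n ℂ}
    (hM : M.PosSemidef) : (c • M).PosSemidef := by
  rw [real_smul_cmatrix]
  refine Matrix.PosSemidef.of_dotProduct_mulVec_nonneg ?_ ?_
  · unfold Matrix.IsHermitian
    rw [conjTranspose_smul, hM.1.eq]
    congr 1
    simp [Complex.ext_iff]
  · intro x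
    rw [smul_mulVec, dotProduct_smul]
    exact mul_nonneg (by exact_mod_cast Complex.zero_le_real.2 hc) (hM.dotProduct_mulVec_nonneg x)

lemma sum_psd {N : Type*} [Fintype N] {M : N → Matrix n n ℂ}
    (h : ∀ i, (M i).PosSemidef) : (∑ i, M i).PosSemidef := by
  classical
  exact Finset.sum_induction _ _ (fun a b ha hb => ha.add hb) Matrix.PosSemidef.zero
    (fun i _ => h i)

lemma cptp_psd {Λ : Matrix n n ℂ →ₗ[ℂ] Matrix n n ℂ} (hΛ : IsCPTP Λ)
    {ρ : Matrix n n ℂ} (hρ : ρ.PosSemidef) : (Λ ρ).PosSemidef := by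
  obtain ⟨⟨N, K, hK⟩, -⟩ := hΛ
  rw [hK]
  refine sum_psd fun i => ?_
  have := hρ.conjTranspose_mul_mul_same (K i)ᴴ
  rwa [conjTranspose_conjTranspose] at this

lemma cptp_state {Λ : Matrix n n ℂ →ₗ[ℂ] Matrix n n ℂ} (hΛ : IsCPTP Λ)
    {ρ : Matrix n n ℂ} (hρ : IsState ρ) : IsState (Λ ρ) :=
  ⟨cptp_psd hΛ hρ.1, (hΛ.2 ρ).trans hρ.2⟩

open scoped MatrixOrder in
lemma psd_eq_conjTranspose_mul_self {n : Type*} [Fintype n] [DecidableEq n] {ρ : Matrix n n ℂ}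
    (hρ : ρ.PosSemidef) : ∃ B : Matrix n n ℂ, ρ = Bᴴ * B := by
  obtain ⟨X, hX, -, h⟩ :=
    CFC.exists_sqrt_of_isSelfAdjoint_of_quasispectrumRestricts hρ.isHermitian
      (QuasispectrumRestricts.nnreal_of_nonneg hρ.nonneg)
  exact ⟨X, by rw [← h]; exact congrArg (· * X) hX.star_eq.symm⟩

lemma one_sub_psd {n : Type*} [Fintype n] [DecidableEq n] {ρ : Matrix n n ℂ}
    (hρ : ρ.PosSemidef) (ht : ρ.trace = 1) : (1 - ρ).PosSemidef := by
  obtain ⟨B, rfl⟩ := psd_eq_conjTranspose_mul_self hρ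
  have hconj : ∀ z : ℂ, (starRingEnd ℂ) z * z = (Complex.normSq z : ℂ) := fun z => by
    rw [mul_comm, Complex.mul_conj]
  have htr : (∑ i, ∑ j, Complex.normSq (B i j)) = 1 := by
    have h0 : (Bᴴ * B).trace = ∑ j, ∑ i, ((Complex.normSq (B i j) : ℝ) : ℂ) := by
      simp [Matrix.trace, Matrix.diag, Matrix.mul_apply, conjTranspose_apply, hconj]
    rw [h0] at ht
    have := congrArg Complex.re ht
    simp only [Complex.re_sum, Complex.ofReal_re, Complex.one_re] at this
    rw [Finset.sum_comm]
    exact this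
  refine Matrix.PosSemidef.of_dotProduct_mulVec_nonneg ?_ ?_
  · unfold Matrix.IsHermitian
    rw [conjTranspose_sub, conjTranspose_one, hρ.1.eq]
  · intro x
    rw [sub_mulVec, dotProduct_sub]
    have hxx : star x ⬝ᵥ (1 : Matrix n n ℂ) *ᵥ x = ((∑ j, Complex.normSq (x j) : ℝ) : ℂ) := by
      rw [one_mulVec]
      simp [dotProduct, hconj]
    have hyy : star x ⬝ᵥ (Bᴴ * B) *ᵥ x = ((∑ i, Complex.normSq ((B *ᵥ x) i) : ℝ) : ℂ) := by
      rw [← mulVec_mulVec, dotProduct_mulVec, vecMul_conjTranspose, star_star]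
      simp [dotProduct, hconj]
    rw [hxx, hyy, ← Complex.ofReal_sub, ← Complex.ofReal_zero, Complex.real_le_real, sub_nonneg]
    calc ∑ i, Complex.normSq ((B *ᵥ x) i)
        ≤ ∑ i, (∑ j, Complex.normSq (B i j)) * ∑ j, Complex.normSq (x j) := by
          refine Finset.sum_le_sum fun i _ => ?_
          have h1 : ‖(B *ᵥ x) i‖ ≤ ∑ j, ‖B i j‖ * ‖x j‖ := by
            refine le_trans (norm_sum_le _ _) (le_of_eq ?_)
            exact Finset.sum_congr rfl fun j _ => norm_mul _ _
          have h2 := Finset.sum_mul_sq_le_sq_mul_sq Finset.univ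
            (fun j => ‖B i j‖) (fun j => ‖x j‖)
          have h3 : Complex.normSq ((B *ᵥ x) i) = (‖(B *ᵥ x) i‖)^2 :=
            (Complex.sq_norm _).symm
          rw [h3]
          calc (‖(B *ᵥ x) i‖)^2
              ≤ (∑ j, ‖B i j‖ * ‖x j‖)^2 :=
                pow_le_pow_left₀ (norm_nonneg _) h1 2
            _ ≤ (∑ j, (‖B i j‖)^2) * ∑ j, (‖x j‖)^2 := h2
            _ = (∑ j, Complex.normSq (B i j)) * ∑ j, Complex.normSq (x j) := by
                simp [Complex.sq_norm]
      _ = (∑ i, ∑ j, Complex.normSq (B i j)) * ∑ j, Complex.normSq (x j) := by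
          rw [Finset.sum_mul]
      _ = ∑ j, Complex.normSq (x j) := by rw [htr, one_mul]

end Helpers

section Multi
variable {m : ℕ} {d : Fin m → ℕ}

lemma dims_pos {σ : Matrix (∀ i, Fin (d i)) (∀ i, Fin (d i)) ℂ}
    (hσ : IsSepState σ) (i : Fin m) : 0 < d i := by
  obtain ⟨N, p, τ, hp, hps, hτ, -⟩ := hσ
  rcases Nat.eq_zero_or_pos N with h0 | hN
  · subst h0; simp at hps
  · by_contra h
    push_neg at h
    have hdi : d i = 0 := Nat.le_zero.mp h
    have he : IsEmpty (Fin (d i)) := by rw [hdi]; infer_instance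
    have htr := (hτ ⟨0, hN⟩ i).2
    rw [Matrix.trace, Finset.univ_eq_empty, Finset.sum_empty] at htr
    exact one_ne_zero htr.symm

lemma maxmixed_sep (hd : ∀ i, 0 < d i) :
    IsSepState (((Fintype.card (∀ i, Fin (d i)) : ℝ))⁻¹ •
      (1 : Matrix (∀ i, Fin (d i)) (∀ i, Fin (d i)) ℂ)) := by
  refine ⟨1, fun _ => 1, fun _ i => (((d i : ℝ))⁻¹ : ℝ) • 1, fun _ => zero_le_one, by simp,
    fun _ i => ⟨smul_psd (by positivity) Matrix.PosSemidef.one, ?_⟩, ?_⟩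
  · rw [Matrix.trace_smul, Matrix.trace_one, Complex.real_smul]
    have hne : ((d i : ℝ) : ℂ) ≠ 0 := by
      exact_mod_cast Nat.cast_ne_zero.mpr (hd i).ne'
    push_cast at hne ⊢
    field_simp
    simp
  · rw [Finset.sum_fin_eq_sum_range]
    simp only [Complex.ofReal_one, one_smul]
    rw [Finset.sum_range_one]
    simp only [dif_pos Nat.zero_lt_one]
    ext x y
    simp only [Matrix.smul_apply, prodMat, Matrix.of_apply, Matrix.one_apply, smul_eq_mul,
      Complex.real_smul]
    rw [Finset.prod_mul_distrib]
    congr 1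
    · push_cast [Fintype.card_pi, Fintype.card_fin]
      rw [Finset.prod_inv_distrib]
    · by_cases h : x = y
      · subst h; simp
      · have : ∃ i, x i ≠ y i := by
          by_contra hc
          push_neg at hc
          exact h (funext hc)
        obtain ⟨i, hi⟩ := this
        rw [if_neg h]
        exact (Finset.prod_eq_zero (f := fun k => if x k = y k then (1:ℂ) else 0)
          (Finset.mem_univ i) (if_neg hi)).symm

lemma RG_set_nonempty (hd : ∀ i, 0 < d i)
    {ρ : Matrix (∀ i, Fin (d i)) (∀ i, Fin (d i)) ℂ} (hρ : IsState ρ) :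
    { s : ℝ | 0 ≤ s ∧ ∃ π, IsState π ∧ IsSepState ((1 + s)⁻¹ • (ρ + s • π)) }.Nonempty := by
  set D : ℝ := (Fintype.card (∀ i, Fin (d i)) : ℝ) with hD
  have hcard : 0 < Fintype.card (∀ i, Fin (d i)) := by
    rw [Fintype.card_pi]
    exact Finset.prod_pos fun i _ => by simpa using hd i
  have hD0 : 0 < D := by rw [hD]; exact_mod_cast hcard
  refine ⟨D, le_of_lt hD0, D⁻¹ • (((1 + D)/D) • 1 - ρ), ⟨⟨?_, ?_⟩, ?_⟩⟩
  · refine smul_psd (by positivity) ?_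
    have : ((1 + D)/D) • (1 : Matrix (∀ i, Fin (d i)) (∀ i, Fin (d i)) ℂ) - ρ
        = (1 - ρ) + (D⁻¹ • 1) := by
      have : (1 + D)/D = 1 + D⁻¹ := by field_simp; ring
      rw [this, add_smul, one_smul]
      abel
    rw [this]
    exact (one_sub_psd hρ.1 hρ.2).add (smul_psd (by positivity) Matrix.PosSemidef.one)
  · rw [Matrix.trace_smul, Matrix.trace_sub, Matrix.trace_smul, Matrix.trace_one, hρ.2,
      Complex.real_smul, Complex.real_smul]
    have hcc : ((Fintype.card (∀ i, Fin (d i)) : ℕ) : ℂ) = ((D : ℝ) : ℂ) := by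
      rw [hD]; push_cast; ring
    rw [hcc]
    have hDC : ((D : ℝ) : ℂ) ≠ 0 := Complex.ofReal_ne_zero.mpr hD0.ne'
    push_cast at hDC ⊢
    field_simp
    ring
  · have key : (1 + D)⁻¹ • (ρ + D • (D⁻¹ • (((1 + D)/D) • (1 : Matrix (∀ i, Fin (d i)) (∀ i, Fin (d i)) ℂ) - ρ))) = D⁻¹ • 1 := by
      rw [smul_smul, mul_inv_cancel₀ hD0.ne', one_smul, add_sub_cancel, smul_smul]
      congr 1
      field_simp
    rw [key]
    exact maxmixed_sep hd

lemma RG_le_of {ρ : Matrix (∀ i, Fin (d i)) (∀ i, Fin (d i)) ℂ} {s : ℝ} (hs : 0 ≤ s)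
    (π : Matrix (∀ i, Fin (d i)) (∀ i, Fin (d i)) ℂ) (hπ : IsState π)
    (hsep : IsSepState ((1 + s)⁻¹ • (ρ + s • π))) : RG ρ ≤ s :=
  csInf_le ⟨0, fun _ hy => hy.1⟩ ⟨hs, π, hπ, hsep⟩

lemma RG_extract (hd : ∀ i, 0 < d i) {ρ : Matrix (∀ i, Fin (d i)) (∀ i, Fin (d i)) ℂ}
    (hρ : IsState ρ) {η c : ℝ} (hRG : RG ρ ≤ η) (hc : η < c) :
    ∃ s, 0 ≤ s ∧ s < c ∧ ∃ π, IsState π ∧ IsSepState ((1 + s)⁻¹ • (ρ + s • π)) := by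
  obtain ⟨s, hsmem, hslt⟩ := exists_lt_of_csInf_lt (RG_set_nonempty hd hρ)
    (lt_of_le_of_lt hRG hc)
  exact ⟨s, hsmem.1, hslt, hsmem.2⟩

end Multi

/-- the composition of an ε-non-entangling map with a δ-non-entangling map
is (ε + δ + εδ)-non-entangling. -/
theorem comp_nonEntangling {m : ℕ} {d : Fin m → ℕ}
    (Λ Ω : Matrix (∀ i, Fin (d i)) (∀ i, Fin (d i)) ℂ →ₗ[ℂ]
           Matrix (∀ i, Fin (d i)) (∀ i, Fin (d i)) ℂ)
    (ε δ : ℝ) (hε : 0 ≤ ε) (hδ : 0 ≤ δ)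
    (hΛ : IsNonEntangling Λ ε) (hΩ : IsNonEntangling Ω δ) :
    IsNonEntangling (Λ ∘ₗ Ω) (ε + δ + ε * δ) := by
  obtain ⟨hΛc, hΛne⟩ := hΛ
  obtain ⟨hΩc, hΩne⟩ := hΩ
  have hcomp : IsCPTP (Λ ∘ₗ Ω) := by
    obtain ⟨⟨N, K, hK⟩, hΛt⟩ := hΛc
    obtain ⟨⟨M, L, hL⟩, hΩt⟩ := hΩc
    constructor
    · refine ⟨N * M, fun k => K (finProdFinEquiv.symm k).1 * L (finProdFinEquiv.symm k).2, fun X => ?_⟩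
      rw [LinearMap.comp_apply, hK, hL]
      rw [Equiv.sum_comp finProdFinEquiv.symm
        (fun p => K p.1 * L p.2 * X * (K p.1 * L p.2)ᴴ), Fintype.sum_prod_type]
      refine Finset.sum_congr rfl fun i _ => ?_
      rw [Finset.mul_sum, Finset.sum_mul]
      refine Finset.sum_congr rfl fun j _ => ?_
      rw [conjTranspose_mul]
      noncomm_ring
    · intro X
      rw [LinearMap.comp_apply, hΛt, hΩt]
  refine ⟨hcomp, fun σ hσ hσsep => ?_⟩
  have hd : ∀ i, 0 < d i := dims_pos hσsep
  rw [LinearMap.comp_apply]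
  have hΩσ : IsState (Ω σ) := cptp_state hΩc hσ
  have hRGΩ : RG (Ω σ) ≤ δ := hΩne σ hσ hσsep
  refine le_of_forall_gt_imp_ge_of_dense fun c hc => ?_
  set x : ℝ := min 1 ((c - (ε + δ + ε * δ)) / (3 + ε + δ)) with hxdef
  have hx0 : 0 < x := by
    apply lt_min one_pos
    apply div_pos (by linarith) (by linarith)
  obtain ⟨s, hs0, hslt, π₁, hπ₁, hsep₁⟩ := RG_extract hd hΩσ hRGΩ
    (show δ < δ + x by linarith)
  set τ := (1 + s)⁻¹ • (Ω σ + s • π₁) with hτdef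
  have h1s : (0:ℝ) < 1 + s := by linarith
  have hτstate : IsState τ := by
    constructor
    · exact smul_psd (by positivity) (hΩσ.1.add (smul_psd hs0 hπ₁.1))
    · rw [hτdef, Matrix.trace_smul, Matrix.trace_add, Matrix.trace_smul, hΩσ.2, hπ₁.2]
      rw [Complex.real_smul, Complex.real_smul, mul_one]
      have hne : ((1 + s : ℝ) : ℂ) ≠ 0 := Complex.ofReal_ne_zero.mpr h1s.ne'
      push_cast at hne ⊢
      field_simp
  have hRGΛτ : RG (Λ τ) ≤ ε := hΛne τ hτstate hsep₁
  have hΛτ : IsState (Λ τ) := cptp_state hΛc hτstate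
  obtain ⟨t, ht0, htlt, π₂, hπ₂, hsep₂⟩ := RG_extract hd hΛτ hRGΛτ
    (show ε < ε + x by linarith)
  have h1t : (0:ℝ) < 1 + t := by linarith
  set s' : ℝ := s + (1 + s) * t with hs'def
  have hs'0 : 0 ≤ s' := by positivity
  have hs'lt : s' ≤ c := by
    have hx1 : x ≤ 1 := min_le_left _ _
    have hx2 : x ≤ (c - (ε + δ + ε * δ)) / (3 + ε + δ) := min_le_right _ _
    have hx3 : x * (3 + ε + δ) ≤ c - (ε + δ + ε * δ) := by
      rw [← le_div_iff₀ (by linarith)]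
      exact hx2
    nlinarith [mul_le_mul_of_nonneg_left htlt.le hs0,
      mul_le_mul_of_nonneg_right hslt.le (by linarith : (0:ℝ) ≤ ε + x)]
  have key : ∀ π', s' • π' = s • (Λ π₁) + ((1 + s) * t) • π₂ →
      (1 + s')⁻¹ • (Λ (Ω σ) + s' • π') = (1 + t)⁻¹ • (Λ τ + t • π₂) := by
    intro π' hπ'
    rw [hπ']
    have hmap : Λ τ = (1 + s)⁻¹ • (Λ (Ω σ) + s • Λ π₁) := by
      rw [hτdef, LinearMap.map_smul_of_tower, map_add, LinearMap.map_smul_of_tower]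
    have hΛτ_eq : Λ (Ω σ) + s • Λ π₁ = (1 + s) • Λ τ := by
      rw [hmap, smul_smul, mul_inv_cancel₀ h1s.ne', one_smul]
    rw [show Λ (Ω σ) + (s • Λ π₁ + ((1 + s) * t) • π₂)
        = (Λ (Ω σ) + s • Λ π₁) + ((1 + s) * t) • π₂ from (add_assoc _ _ _).symm,
      hΛτ_eq, ← smul_smul ((1+s):ℝ) t π₂, ← smul_add, smul_smul]
    congr 1
    rw [hs'def]
    field_simp
    ring
  rcases eq_or_lt_of_le hs'0 with hz | hpos
  · -- s' = 0, hence s = 0 and t = 0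
    have hs0' : s = 0 := by nlinarith
    have ht0' : t = 0 := by nlinarith
    refine le_trans (RG_le_of le_rfl π₂ hπ₂ ?_) (by linarith)
    have : (1 + (0:ℝ))⁻¹ • (Λ (Ω σ) + (0:ℝ) • π₂) = Λ (Ω σ) := by simp
    rw [this]
    have hτσ : τ = Ω σ := by rw [hτdef, hs0']; simp
    have : Λ (Ω σ) = (1 + t)⁻¹ • (Λ τ + t • π₂) := by
      rw [hτσ, ht0']; simp
    rw [this]
    exact hsep₂
  · set π' := (s')⁻¹ • (s • (Λ π₁) + ((1 + s) * t) • π₂) with hπ'def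
    have hπ'eq : s' • π' = s • (Λ π₁) + ((1 + s) * t) • π₂ := by
      rw [hπ'def, smul_smul, mul_inv_cancel₀ hpos.ne', one_smul]
    have hΛπ₁ : IsState (Λ π₁) := cptp_state hΛc hπ₁
    have hπ'state : IsState π' := by
      constructor
      · exact smul_psd (by positivity)
          ((smul_psd hs0 hΛπ₁.1).add (smul_psd (by positivity) hπ₂.1))
      · rw [hπ'def, Matrix.trace_smul, Matrix.trace_add, Matrix.trace_smul,
          Matrix.trace_smul, hΛπ₁.2, hπ₂.2]
        rw [Complex.real_smul, Complex.real_smul, Complex.real_smul, mul_one, mul_one]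
        have hr : (0:ℝ) < s + s * t + t := by
          rw [hs'def] at hpos; nlinarith
        have h2 : ((s:ℂ) + (s:ℂ) * (t:ℂ) + (t:ℂ)) ≠ 0 := by
          have := Complex.ofReal_ne_zero.mpr hr.ne'
          push_cast at this
          exact this
        rw [hs'def]
        push_cast
        exact inv_mul_cancel₀ (by rw [show (s:ℂ) + (1 + s) * t = s + s * t + t by ring]; exact h2)
    refine le_trans (RG_le_of hs'0 π' hπ'state ?_) hs'lt
    rw [key π' hπ'eq]
    exact hsep₂
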